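/- Let S be a valid solution of an Evolomino instance and let A = a₁,…,a_L be one of its arrows such that every white cell of the board that is orthogonally adjacent to an interior arrow cell a_i (1 < i < L) and distinct from a_{i−1} and a_{i+1} is shaded (the arrow is 'fenced'). Then exactly two blocks of S meet A; the first block B₁ (in arrow order) contains exactly one arrow cell, which is distinct from a_L; and the second block B₂ satisfies B₂ ∩ {a₁,…,a_L} = {a_L}, |B₂| = |B₁| + 1, and v +ᵥ B₁ ⊆ B₂ for some v ∈ ℤ × ℤ. -/

import Mathlib

open Pointwise

/-- A cell of the (infinite) grid. -/
abbrev Cell : Type := ℤ × ℤ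

/-- Orthogonal adjacency: the two cells differ by exactly 1 in exactly one coordinate. -/
def Adj (c d : Cell) : Prop :=
  (c.1 = d.1 ∧ (c.2 - d.2 = 1 ∨ d.2 - c.2 = 1)) ∨
  (c.2 = d.2 ∧ (c.1 - d.1 = 1 ∨ d.1 - c.1 = 1))

/-- The `p × q` board `{1,…,p} × {1,…,q} ⊆ ℤ × ℤ`. -/
def board (p q : ℕ) : Set Cell :=
  {c | 1 ≤ c.1 ∧ c.1 ≤ (p : ℤ) ∧ 1 ≤ c.2 ∧ c.2 ≤ (q : ℤ)}

/-- The data of an Evolomino instance. -/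
structure EvoInstance where
  p : ℕ
  q : ℕ
  shaded : Set Cell
  presq : Finset Cell
  arrows : List (List Cell)

/-- A cell is white if it lies on the board and is not shaded. -/
def EvoInstance.White (I : EvoInstance) (c : Cell) : Prop :=
  c ∈ board I.p I.q ∧ c ∉ I.shaded

/-- A legal arrow: a duplicate-free list of at least two white cells in which
consecutive cells are orthogonally adjacent. -/
def IsArrow (I : EvoInstance) (A : List Cell) : Prop :=
  A.Nodup ∧ 2 ≤ A.length ∧ (∀ c ∈ A, I.White c) ∧ A.Chain' Adj

/-- Well-formedness of an Evolomino instance: positive dimensions, shaded cells on the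
board, pre-drawn squares white, every arrow legal, and no cell on two arrows. -/
def EvoInstance.WellFormed (I : EvoInstance) : Prop :=
  0 < I.p ∧ 0 < I.q ∧ I.shaded ⊆ board I.p I.q ∧
  (∀ c ∈ I.presq, I.White c) ∧
  (∀ A ∈ I.arrows, IsArrow I A) ∧
  I.arrows.Pairwise (fun A B => ∀ c ∈ A, c ∉ B)

/-- A solution: a set of white cells containing the pre-drawn squares. -/
def IsSolution (I : EvoInstance) (S : Set Cell) : Prop :=
  (∀ c ∈ S, I.White c) ∧ ↑I.presq ⊆ S

/-- Connectivity inside `S` via orthogonal adjacency. -/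
def ConnIn (S : Set Cell) : Cell → Cell → Prop :=
  Relation.ReflTransGen (fun x y => x ∈ S ∧ y ∈ S ∧ Adj x y)

/-- `B` is a block of `S`: a connected component of `S` under orthogonal adjacency. -/
def IsBlock (S : Set Cell) (B : Set Cell) : Prop :=
  ∃ c ∈ S, B = {d | d ∈ S ∧ ConnIn S c d}

/-- The cell `c` lies on some arrow of the instance. -/
def OnArrow (I : EvoInstance) (c : Cell) : Prop :=
  ∃ A ∈ I.arrows, c ∈ A

/-- The set `B` meets the arrow `A`. -/
def Meets (B : Set Cell) (A : List Cell) : Prop :=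
  ∃ c ∈ B, c ∈ A

/-- The first position along the arrow `A` at which a cell of `B` occurs. -/
noncomputable def firstHit (A : List Cell) (B : Set Cell) : ℕ :=
  sInf {i | ∃ h : i < A.length, A.get ⟨i, h⟩ ∈ B}

/-- `B` and `B'` are consecutive blocks of `S` (in arrow order) meeting the arrow `A`. -/
def Consecutive (S : Set Cell) (A : List Cell) (B B' : Set Cell) : Prop :=
  IsBlock S B ∧ IsBlock S B' ∧ Meets B A ∧ Meets B' A ∧
  firstHit A B < firstHit A B' ∧
  ∀ B'', IsBlock S B'' → Meets B'' A →
    firstHit A B'' ≤ firstHit A B ∨ firstHit A B' ≤ firstHit A B''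

/-- A valid solution of an Evolomino instance. -/
def IsValidSolution (I : EvoInstance) (S : Set Cell) : Prop :=
  IsSolution I S ∧
  (∀ B, IsBlock S B → ∃! c, c ∈ B ∧ OnArrow I c) ∧
  (∀ A ∈ I.arrows, ∃ B B', IsBlock S B ∧ IsBlock S B' ∧ B ≠ B' ∧
    Meets B A ∧ Meets B' A) ∧
  (∀ A ∈ I.arrows, ∀ B B', Consecutive S A B B' →
    B'.ncard = B.ncard + 1 ∧ ∃ v : Cell, v +ᵥ B ⊆ B')

/-- The arrow `A` is fenced: every board cell orthogonally adjacent to an interior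
arrow cell `a_i` (`1 < i < L`) and distinct from `a_{i-1}` and `a_{i+1}` is shaded
(so no white cell other than the arrow's own route neighbours an interior cell). -/
def Fenced (I : EvoInstance) (A : List Cell) : Prop :=
  ∀ i : ℕ, ∀ _h1 : 0 < i, ∀ h2 : i + 1 < A.length,
    ∀ c ∈ board I.p I.q,
      Adj c (A.get ⟨i, by omega⟩) →
      c ≠ A.get ⟨i - 1, by omega⟩ →
      c ≠ A.get ⟨i + 1, h2⟩ →
      c ∈ I.shaded

lemma adj_symm : Symmetric Adj := by
  intro c d h
  rcases h with ⟨h1, h2⟩ | ⟨h1, h2⟩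
  · exact Or.inl ⟨h1.symm, h2.symm⟩
  · exact Or.inr ⟨h1.symm, h2.symm⟩

lemma connIn_symm (S : Set Cell) : Symmetric (ConnIn S) :=
  fun _ _ h => by
    unfold ConnIn at *
    induction h with
    | refl => exact .refl
    | tail _ hbc ih => exact .head ⟨hbc.2.1, hbc.1, adj_symm hbc.2.2⟩ ih

lemma block_eq_of_mem {S B B' : Set Cell} (hB : IsBlock S B) (hB' : IsBlock S B')
    {x : Cell} (hx : x ∈ B) (hx' : x ∈ B') : B = B' := by
  obtain ⟨c, hc, rfl⟩ := hB
  obtain ⟨c', hc', rfl⟩ := hB'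
  have hcc' : ConnIn S c c' := hx.2.trans (connIn_symm S hx'.2)
  ext d
  constructor
  · rintro ⟨hdS, hd⟩; exact ⟨hdS, ((connIn_symm S hcc').trans hd)⟩
  · rintro ⟨hdS, hd⟩; exact ⟨hdS, hcc'.trans hd⟩

lemma firstHit_spec {A : List Cell} {B : Set Cell} (h : Meets B A) :
    ∃ hlt : firstHit A B < A.length, A.get ⟨firstHit A B, hlt⟩ ∈ B := by
  obtain ⟨c, hcB, hcA⟩ := h
  obtain ⟨i, rfl⟩ := List.mem_iff_get.mp hcA
  have hne : {j | ∃ h : j < A.length, A.get ⟨j, h⟩ ∈ B}.Nonempty :=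
    ⟨i.1, i.2, by simpa using hcB⟩
  exact Nat.sInf_mem hne

lemma firstHit_le {A : List Cell} {B : Set Cell} {i : ℕ} (hi : i < A.length)
    (h : A.get ⟨i, hi⟩ ∈ B) : firstHit A B ≤ i := Nat.sInf_le ⟨hi, h⟩

lemma evo_interior_singleton (I : EvoInstance) (S : Set Cell)
    (hwhite : ∀ c ∈ S, I.White c)
    (huniq : ∀ B, IsBlock S B → ∃! c, c ∈ B ∧ OnArrow I c)
    (A : List Cell) (hA : A ∈ I.arrows) (hNd : A.Nodup)
    (hfence : Fenced I A)
    (i : ℕ) (h1 : 0 < i) (h2 : i + 1 < A.length)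
    (B : Set Cell) (hB : IsBlock S B) (hiB : A.get ⟨i, by omega⟩ ∈ B) :
    B = {A.get ⟨i, by omega⟩} := by
  set a := A.get ⟨i, by omega⟩ with ha
  refine (Set.eq_singleton_iff_unique_mem).mpr ⟨hiB, fun d hd => ?_⟩
  by_contra hda
  obtain ⟨c₀, hc₀, hBeq⟩ := hB
  have hConn : ConnIn S a d := by
    have h1' : ConnIn S c₀ a := (hBeq ▸ hiB).2
    have h2' : ConnIn S c₀ d := (hBeq ▸ hd).2
    exact (connIn_symm S h1').trans h2'
  rcases hConn.cases_head with heq | ⟨x, ⟨haS, hxS, hadj⟩, _⟩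
  · exact hda heq.symm
  · -- x is a white cell adjacent to the interior arrow cell a
    have hxw : I.White x := hwhite x hxS
    have hxA : x = A.get ⟨i - 1, by omega⟩ ∨ x = A.get ⟨i + 1, h2⟩ := by
      by_contra hcon
      push_neg at hcon
      exact hxw.2 (hfence i h1 h2 x hxw.1 (adj_symm hadj) hcon.1 hcon.2)
    have hxmem : x ∈ A := by
      rcases hxA with h | h <;> exact h ▸ List.get_mem _ _
    have hxa : x ≠ a := by
      rcases hxA with h | h <;> subst h <;> rw [ha] <;> intro heq <;>
        · have := Fin.mk.injEq .. ▸ hNd.get_inj_iff.mp heq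
          omega
    -- x ∈ B
    have hxB : x ∈ B := by
      rw [hBeq]
      exact ⟨hxS, (hBeq ▸ hiB).2.tail ⟨(hBeq ▸ hiB).1, hxS, hadj⟩⟩
    obtain ⟨u, _, hu⟩ := huniq B ⟨c₀, hc₀, hBeq⟩
    have e1 : a = u := hu a ⟨hiB, A, hA, List.get_mem _ _⟩
    have e2 : x = u := hu x ⟨hxB, A, hA, hxmem⟩
    exact hxa (e2.trans e1.symm)

/-- A fenced arrow in a valid solution meets exactly two blocks:
the first one contains exactly one arrow cell, which is not the last cell `a_L`,
and the second one intersects the arrow exactly in `a_L`, has one more cell than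
the first block, and contains a translate of it. -/
theorem evolomino_fenced_arrow
    (I : EvoInstance) (hWF : I.WellFormed)
    (S : Set Cell) (hS : IsValidSolution I S)
    (A : List Cell) (hA : A ∈ I.arrows) (hAne : A ≠ [])
    (hfence : Fenced I A) :
    ∃ B₁ B₂ : Set Cell,
      IsBlock S B₁ ∧ IsBlock S B₂ ∧ B₁ ≠ B₂ ∧ Meets B₁ A ∧ Meets B₂ A ∧
      (∀ B, IsBlock S B → Meets B A → B = B₁ ∨ B = B₂) ∧
      firstHit A B₁ < firstHit A B₂ ∧
      (∃! c, c ∈ B₁ ∧ c ∈ A) ∧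
      (∀ c ∈ B₁, c ∈ A → c ≠ A.getLast hAne) ∧
      (∀ c, (c ∈ B₂ ∧ c ∈ A) ↔ c = A.getLast hAne) ∧
      B₂.ncard = B₁.ncard + 1 ∧
      ∃ v : Cell, v +ᵥ B₁ ⊆ B₂ := by
  obtain ⟨⟨hwhiteS, _⟩, huniq, hmeet2, hgrow⟩ := hS
  obtain ⟨hNd, hlen2, hwhiteA, hchain⟩ := hWF.2.2.2.2.1 A hA
  -- the board is finite
  have hboardfin : (board I.p I.q).Finite := by
    apply (Set.finite_Icc ((1:ℤ), (1:ℤ)) ((I.p:ℤ), (I.q:ℤ))).subset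
    intro c hc
    simp only [Set.mem_Icc, Prod.le_def]
    exact ⟨⟨hc.1, hc.2.2.1⟩, hc.2.1, hc.2.2.2⟩
  have hblockfin : ∀ B, IsBlock S B → B.Finite := by
    rintro B ⟨c, hc, rfl⟩
    exact hboardfin.subset fun d hd => (hwhiteS d hd.1).1
  -- key: the unique arrow cell of a block meeting A is its firstHit cell
  have key : ∀ B, IsBlock S B → Meets B A → ∀ hlt : firstHit A B < A.length,
      A.get ⟨firstHit A B, hlt⟩ ∈ B ∧
      ∀ c ∈ B, c ∈ A → c = A.get ⟨firstHit A B, hlt⟩ := by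
    intro B hB hM hlt
    obtain ⟨hlt', hmem⟩ := firstHit_spec hM
    have hmem : A.get ⟨firstHit A B, hlt⟩ ∈ B := hmem
    refine ⟨hmem, fun c hcB hcA => ?_⟩
    obtain ⟨u, _, hu⟩ := huniq B hB
    have e1 : c = u := hu c ⟨hcB, A, hA, hcA⟩
    have e2 : A.get ⟨firstHit A B, hlt⟩ = u := hu _ ⟨hmem, A, hA, List.get_mem _ _⟩
    exact e1.trans e2.symm
  have hinj : ∀ B B', IsBlock S B → IsBlock S B' → Meets B A → Meets B' A →
      firstHit A B = firstHit A B' → B = B' := by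
    intro B B' hB hB' hM hM' he
    obtain ⟨hlt, hmem⟩ := firstHit_spec hM
    obtain ⟨hlt', hmem'⟩ := firstHit_spec hM'
    have : A.get ⟨firstHit A B, hlt⟩ ∈ B' := by
      have : (⟨firstHit A B, hlt⟩ : Fin A.length) = ⟨firstHit A B', hlt'⟩ :=
        Fin.ext he
      rw [this]; exact hmem'
    exact block_eq_of_mem hB hB' hmem this
  -- at least two distinct blocks meet A
  obtain ⟨C, C', hC, hC', hCne, hMC, hMC'⟩ := hmeet2 A hA
  -- B₁ : block with minimal firstHit
  set T : Set ℕ := {i | ∃ B, IsBlock S B ∧ Meets B A ∧ firstHit A B = i} with hT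
  have hTne : T.Nonempty := ⟨firstHit A C, C, hC, hMC, rfl⟩
  obtain ⟨B₁, hB₁, hM₁, hfh₁⟩ := Nat.sInf_mem hTne
  set m := sInf T with hm
  -- B₂ : block with minimal firstHit among those exceeding m
  set T' : Set ℕ := {i | m < i ∧ ∃ B, IsBlock S B ∧ Meets B A ∧ firstHit A B = i}
    with hT'
  have hT'ne : T'.Nonempty := by
    rcases eq_or_ne C B₁ with rfl | hne
    · refine ⟨firstHit A C', ?_, C', hC', hMC', rfl⟩
      have hge : m ≤ firstHit A C' := Nat.sInf_le ⟨C', hC', hMC', rfl⟩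
      rcases hge.lt_or_eq with h | h
      · exact h
      · exact absurd (hinj _ _ hC' hC hMC' hMC (by omega)) (Ne.symm hCne)
    · refine ⟨firstHit A C, ?_, C, hC, hMC, rfl⟩
      have hge : m ≤ firstHit A C := Nat.sInf_le ⟨C, hC, hMC, rfl⟩
      rcases hge.lt_or_eq with h | h
      · exact h
      · exact absurd (hinj _ _ hC hB₁ hMC hM₁ (by omega)) hne
  obtain ⟨hmm', B₂, hB₂, hM₂, hfh₂⟩ := Nat.sInf_mem hT'ne
  set m' := sInf T' with hm'
  have hlt12 : firstHit A B₁ < firstHit A B₂ := by omega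
  -- B₁ and B₂ are consecutive
  have hcons : Consecutive S A B₁ B₂ := by
    refine ⟨hB₁, hB₂, hM₁, hM₂, hlt12, fun B'' hb hmB => ?_⟩
    rcases le_or_gt (firstHit A B'') (firstHit A B₁) with h | h
    · exact Or.inl h
    · refine Or.inr ?_
      rw [hfh₂]
      exact Nat.sInf_le ⟨by omega, B'', hb, hmB, rfl⟩
  obtain ⟨hcard, v, hv⟩ := hgrow A hA B₁ B₂ hcons
  -- size facts
  obtain ⟨hlt₁, hmem₁⟩ := firstHit_spec hM₁
  obtain ⟨hlt₂, hmem₂⟩ := firstHit_spec hM₂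
  have hn1 : 0 < B₁.ncard := (Set.ncard_pos (hblockfin B₁ hB₁)).mpr ⟨_, hmem₁⟩
  have hn2 : 2 ≤ B₂.ncard := by omega
  -- firstHit A B₂ = A.length - 1
  have hfin₂ : firstHit A B₂ = A.length - 1 := by
    by_contra hne
    have h2' : firstHit A B₂ + 1 < A.length := by omega
    have h1' : 0 < firstHit A B₂ := by omega
    have := evo_interior_singleton I S hwhiteS huniq A hA hNd hfence
      (firstHit A B₂) h1' h2' B₂ hB₂ hmem₂
    rw [this, Set.ncard_singleton] at hn2
    omega
  have hlast : A.getLast hAne = A.get ⟨firstHit A B₂, hlt₂⟩ := by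
    rw [List.getLast_eq_getElem, List.get_eq_getElem]
    congr 1
    exact hfin₂.symm
  obtain ⟨hmemB₁, huniqB₁⟩ := key B₁ hB₁ hM₁ hlt₁
  obtain ⟨hmemB₂, huniqB₂⟩ := key B₂ hB₂ hM₂ hlt₂
  have hB1ne2 : B₁ ≠ B₂ := fun h => by rw [h] at hlt12; omega
  refine ⟨B₁, B₂, hB₁, hB₂, hB1ne2, hM₁, hM₂, ?_, hlt12, ?_, ?_, ?_, hcard, v, hv⟩
  · -- only two blocks
    intro B hB hM
    have hge : m ≤ firstHit A B := Nat.sInf_le ⟨B, hB, hM, rfl⟩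
    rcases hge.lt_or_eq with h | h
    · right
      have hge' : m' ≤ firstHit A B := Nat.sInf_le ⟨h, B, hB, hM, rfl⟩
      obtain ⟨hltB, _⟩ := firstHit_spec hM
      have : firstHit A B = firstHit A B₂ := by omega
      exact hinj _ _ hB hB₂ hM hM₂ this
    · exact Or.inl (hinj _ _ hB hB₁ hM hM₁ (by omega))
  · -- unique cell of B₁ on A
    exact ⟨A.get ⟨firstHit A B₁, hlt₁⟩, ⟨hmemB₁, List.get_mem _ _⟩,
      fun c hc => huniqB₁ c hc.1 hc.2⟩
  · -- B₁'s cell is not the last arrow cell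
    intro c hcB hcA
    rw [huniqB₁ c hcB hcA, hlast]
    intro heq
    have := Fin.mk.injEq .. ▸ hNd.get_inj_iff.mp heq
    omega
  · -- B₂ ∩ A = {last}
    intro c
    constructor
    · rintro ⟨hcB, hcA⟩
      rw [huniqB₂ c hcB hcA, hlast]
    · rintro rfl
      rw [hlast]
      exact ⟨hmem₂, List.get_mem _ _⟩
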